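/- Let m ≥ h+1 and let U be an h-scattered F_q-subspace of V = F_{q^m}^k with dim_{F_q} U ≥ ⌊m(k−1)/(h+1)⌋ + 1. Then for every v ∈ V \ {0}, there exist vectors u_1, …, u_{h+1} ∈ U, linearly independent over F_q, such that v ∈ ⟨u_1, …, u_{h+1}⟩_{F_{q^m}}. In particular the linear set L_U is a (ρ−1)-saturating set of PG(k−1, q^m) for some ρ ≤ h+1. -/

import Mathlib

open Module Submodule

/-- Intermediate subspace of prescribed dimension between two nested subspaces. -/
lemma aux_exists_intermediate {F V : Type*} [Field F] [AddCommGroup V] [Module F V]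
    [FiniteDimensional F V] (n : ℕ) :
    ∀ p q : Submodule F V, p ≤ q → Module.finrank F p ≤ n → n ≤ Module.finrank F q →
      ∃ r : Submodule F V, p ≤ r ∧ r ≤ q ∧ Module.finrank F r = n := by
  induction n with
  | zero =>
      intro p q hpq hp _
      have hp0 : p = ⊥ := by
        rw [← Submodule.finrank_eq_zero (S := p)]; omega
      exact ⟨⊥, by simp [hp0], bot_le, by simp⟩
  | succ n ih =>
      intro p q hpq hp hq
      by_cases hpn : Module.finrank F p = n + 1
      · exact ⟨p, le_rfl, hpq, hpn⟩
      · obtain ⟨r₀, hpr₀, hr₀q, hr₀⟩ := ih p q hpq (by omega) (by omega)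
        have hnotle : ¬ q ≤ r₀ := by
          intro hle
          have := Submodule.finrank_mono (R := F) hle
          omega
        obtain ⟨x, hxq, hxr₀⟩ := SetLike.not_le_iff_exists.mp hnotle
        have hx0 : x ≠ 0 := fun h => hxr₀ (h ▸ r₀.zero_mem)
        refine ⟨r₀ ⊔ Submodule.span F {x}, hpr₀.trans le_sup_left,
          sup_le hr₀q (by rwa [Submodule.span_singleton_le_iff_mem]), ?_⟩
        have hinf : r₀ ⊓ Submodule.span F {x} = ⊥ := by
          rw [eq_bot_iff]
          rintro y ⟨hy1, hy2⟩
          obtain ⟨a, rfl⟩ := Submodule.mem_span_singleton.mp hy2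
          rcases eq_or_ne a 0 with rfl | ha
          · simp
          · exact absurd (by simpa [smul_smul, inv_mul_cancel₀ ha] using
              Submodule.smul_mem r₀ a⁻¹ hy1) hxr₀
        have := Submodule.finrank_sup_add_finrank_inf_eq r₀ (Submodule.span F {x})
        rw [hinf, finrank_span_singleton hx0] at this
        simp only [finrank_bot] at this
        omega

theorem stmt5 (q m k h : ℕ) (hq : ∃ p n : ℕ, p.Prime ∧ 0 < n ∧ q = p ^ n)
    (hm : h + 1 ≤ m) (hh : 0 < h) (hhk : h < k)
    (F K : Type*) [Field F] [Field K] [Algebra F K]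
    [Fintype F] [Fintype K] (hF : Fintype.card F = q) (hcard : Fintype.card K = q ^ m)
    (U : Submodule F (Fin k → K))
    (hspan : Submodule.span K (U : Set (Fin k → K)) = ⊤)
    (hscatt : ∀ W : Submodule K (Fin k → K), Module.finrank K W = h →
      Module.finrank F ↥(U ⊓ W.restrictScalars F) ≤ h)
    (hdim : m * (k - 1) / (h + 1) + 1 ≤ Module.finrank F U) :
    ∀ v : Fin k → K, v ≠ 0 → ∃ u : Fin (h + 1) → (Fin k → K),
      (∀ i, u i ∈ U) ∧ LinearIndependent F u ∧ v ∈ Submodule.span K (Set.range u) := by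
  intro v hv
  -- basic facts
  obtain ⟨p, n, hp, hn, rfl⟩ := hq
  have hq2 : 2 ≤ p ^ n := Nat.one_lt_pow (by omega) hp.one_lt
  have : Module.Finite F K := Module.Finite.of_finite
  have hKm : Module.finrank F K = m := by
    have := card_eq_pow_finrank (K := F) (V := K)
    rw [hF, hcard] at this
    exact (Nat.pow_right_injective hq2 this.symm)
  have : Module.Finite F (Fin k → K) := Module.Finite.of_finite
  set d := Module.finrank F U with hd
  -- an F-linearly independent family of h+1 scalars in K
  have hle : h + 1 ≤ Module.finrank F K := by omega
  let bK := Module.finBasis F K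
  let lam : Fin (h + 1) → K := fun i => bK (Fin.castLE hle i)
  have hlam : LinearIndependent F lam :=
    bK.linearIndependent.comp _ (Fin.castLE_injective hle)
  -- the big linear map
  let g : ((Fin (h + 1) → ↥U) × K) →ₗ[F] (Fin k → K) :=
    { toFun := fun p => (∑ i, lam i • ((p.1 i : (Fin k → K)))) - p.2 • v
      map_add' := by
        intro a b
        simp only [Prod.fst_add, Pi.add_apply, Submodule.coe_add, smul_add,
          Finset.sum_add_distrib, Prod.snd_add, add_smul]
        abel
      map_smul' := by
        intro a b
        simp only [Prod.smul_fst, Pi.smul_apply, SetLike.val_smul, Prod.smul_snd,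
          RingHom.id_apply, smul_sub, Finset.smul_sum, smul_assoc]
        congr 1
        refine Finset.sum_congr rfl fun i _ => ?_
        rw [smul_comm] }
  -- dimension count : the map has nontrivial kernel
  have hdomdim : Module.finrank F ((Fin (h + 1) → ↥U) × K) = (h + 1) * d + m := by
    rw [Module.finrank_prod, Module.finrank_pi_fintype, hKm]
    simp [Finset.sum_const, mul_comm, ← hd]
  have hcoddim : Module.finrank F (Fin k → K) = k * m := by
    rw [Module.finrank_pi_fintype]
    simp [hKm, Finset.sum_const, mul_comm]
  have harith : k * m < (h + 1) * d + m := by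
    have h1 : (h + 1) * (m * (k - 1) / (h + 1) + 1) ≤ (h + 1) * d :=
      Nat.mul_le_mul_left _ hdim
    have h2 := Nat.div_add_mod (m * (k - 1)) (h + 1)
    have h3 := Nat.mod_lt (m * (k - 1)) (show 0 < h + 1 by omega)
    have h4 : m * k = m * (k - 1) + m := by
      have hk : k = k - 1 + 1 := by omega
      calc m * k = m * (k - 1 + 1) := by rw [← hk]
      _ = m * (k - 1) + m := Nat.mul_succ _ _
    have h5 : (h + 1) * (m * (k - 1) / (h + 1) + 1)
        = (h + 1) * (m * (k - 1) / (h + 1)) + (h + 1) := by ring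
    have h6 : k * m = m * k := Nat.mul_comm _ _
    omega
  obtain ⟨uc, hucker, hucne⟩ : ∃ x, g x = 0 ∧ x ≠ 0 := by
    by_contra hcon
    push_neg at hcon
    have hinj : Function.Injective g := by
      rw [← LinearMap.ker_eq_bot]
      by_contra hker
      obtain ⟨x, hx, hx0⟩ := (Submodule.ne_bot_iff _).mp hker
      exact hx0 (hcon x hx)
    have := LinearMap.finrank_le_finrank_of_injective hinj
    omega
  set u : Fin (h + 1) → ↥U := uc.1 with hu
  set c : K := uc.2 with hc
  have hrel : ∑ i, lam i • ((u i : (Fin k → K))) = c • v := by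
    have h0 : (∑ i, lam i • ((u i : (Fin k → K)))) - c • v = 0 := hucker
    exact sub_eq_zero.mp h0
  -- some component is nonzero
  have hune : ∃ i, (u i : (Fin k → K)) ≠ 0 := by
    by_contra hall
    push_neg at hall
    have hu0 : u = 0 := by
      funext i
      exact Subtype.ext (hall i)
    have hcv : c • v = 0 := by
      rw [← hrel, hu0]
      simp
    have hc0 : c = 0 := by
      rcases smul_eq_zero.mp hcv with h | h
      · exact h
      · exact absurd h hv
    exact hucne (Prod.ext hu0 hc0)
  obtain ⟨i₀, hi₀⟩ := hune
  -- the span of the u i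
  set u' : Fin (h + 1) → (Fin k → K) := fun i => (u i : (Fin k → K)) with hu'
  set W₀ : Submodule F (Fin k → K) := Submodule.span F (Set.range u') with hW₀
  have hW₀U : W₀ ≤ U := Submodule.span_le.mpr (by
    rintro x ⟨i, rfl⟩
    exact (u i).2)
  have hW₀rank : Module.finrank F W₀ ≤ h + 1 := by
    classical
    calc Module.finrank F W₀ ≤ (Set.range u').toFinset.card := finrank_span_le_card _
    _ ≤ Fintype.card (Fin (h + 1)) := by
        rw [Set.toFinset_range]
        exact (Finset.card_image_le).trans (by simp)
    _ = h + 1 := by simp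
  have hd1 : h + 1 ≤ d := by
    have hk1 : h ≤ k - 1 := by omega
    have : h * (h + 1) ≤ m * (k - 1) := by
      calc h * (h + 1) = (h + 1) * h := Nat.mul_comm _ _
      _ ≤ m * (k - 1) := Nat.mul_le_mul hm hk1
    have := (Nat.le_div_iff_mul_le (show 0 < h + 1 by omega)).mpr this
    omega
  -- extend W₀ to an (h+1)-dimensional F-subspace of U
  obtain ⟨W₁, hW₀W₁, hW₁U, hW₁rank⟩ :=
    aux_exists_intermediate (h + 1) W₀ U hW₀U hW₀rank (hd ▸ hd1)
  let bW : Basis (Fin (h + 1)) F ↥W₁ := (Module.finBasis F ↥W₁).reindex (finCongr hW₁rank)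
  set ut : Fin (h + 1) → (Fin k → K) := fun i => ((bW i : ↥W₁) : (Fin k → K)) with hut
  have hutU : ∀ i, ut i ∈ U := fun i => hW₁U (bW i).2
  have hutind : LinearIndependent F ut := by
    have := bW.linearIndependent.map' W₁.subtype (Submodule.ker_subtype W₁)
    exact this
  by_cases hvS : v ∈ Submodule.span K (Set.range ut)
  · exact ⟨ut, hutU, hutind, hvS⟩
  · -- contradiction with h-scatteredness
    exfalso
    set S : Submodule K (Fin k → K) := Submodule.span K (Set.range ut) with hS
    have hutS : ∀ i, ut i ∈ S := fun i => Submodule.subset_span ⟨i, rfl⟩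
    -- W₁ = F-span of ut, so W₁ ⊆ S
    have hW₁span : Submodule.span F (Set.range ut) = W₁ := by
      have : Set.range ut = W₁.subtype '' (Set.range bW) := by
        rw [← Set.range_comp]
        rfl
      rw [this, ← Submodule.map_span, bW.span_eq, Submodule.map_subtype_top]
    have hW₁S : (W₁ : Set (Fin k → K)) ⊆ (S : Set (Fin k → K)) := by
      intro x hx
      rw [← hW₁span] at hx
      have : Submodule.span F (Set.range ut) ≤ (Submodule.span K (Set.range ut)).restrictScalars F :=
        Submodule.span_le.mpr (fun y hy => Submodule.subset_span hy)
      exact this hx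
    have hu'W₁ : ∀ i, u' i ∈ W₁ := fun i => hW₀W₁ (Submodule.subset_span ⟨i, rfl⟩)
    have hu'S : ∀ i, u' i ∈ S := fun i => hW₁S (hu'W₁ i)
    have hcvS : c • v ∈ S := by
      rw [← hrel]
      exact Submodule.sum_mem _ (fun i _ => Submodule.smul_mem _ _ (hu'S i))
    have hc0 : c = 0 := by
      by_contra hcne
      exact hvS (by
        have : (c⁻¹ : K) • (c • v) ∈ S := Submodule.smul_mem _ _ hcvS
        rwa [smul_smul, inv_mul_cancel₀ hcne, one_smul] at this)
    have hrel0 : ∑ i, lam i • u' i = 0 := by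
      rw [hrel, hc0, zero_smul]
    -- ut is not K-linearly independent
    have hKdep : ¬ LinearIndependent K ut := by
      intro hK
      set a : Fin (h + 1) → Fin (h + 1) → F :=
        fun i j => bW.repr ⟨u' i, hu'W₁ i⟩ j with ha
      have hdecomp : ∀ i, u' i = ∑ j, a i j • ut j := by
        intro i
        have h1 : (⟨u' i, hu'W₁ i⟩ : ↥W₁) = ∑ j, a i j • bW j := (bW.sum_repr _).symm
        calc u' i = ((⟨u' i, hu'W₁ i⟩ : ↥W₁) : (Fin k → K)) := rfl
        _ = ((∑ j, a i j • bW j : ↥W₁) : (Fin k → K)) := congrArg _ h1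
        _ = ∑ j, a i j • ut j := by
            push_cast
            rfl
      have hsum0 : ∑ j, (∑ i, a i j • lam i) • ut j = 0 := by
        calc ∑ j, (∑ i, a i j • lam i) • ut j
            = ∑ j, ∑ i, (a i j • lam i) • ut j := by
              refine Finset.sum_congr rfl fun j _ => ?_
              rw [Finset.sum_smul]
          _ = ∑ i, ∑ j, (a i j • lam i) • ut j := Finset.sum_comm
          _ = ∑ i, lam i • u' i := by
              refine Finset.sum_congr rfl fun i _ => ?_
              rw [hdecomp i, Finset.smul_sum]
              refine Finset.sum_congr rfl fun j _ => ?_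
              rw [smul_assoc, smul_comm]
          _ = 0 := hrel0
      have hμ0 : ∀ j, ∑ i, a i j • lam i = 0 :=
        Fintype.linearIndependent_iff.mp hK _ hsum0
      have ha0 : ∀ i j, a i j = 0 := by
        intro i j
        exact Fintype.linearIndependent_iff.mp hlam (fun i => a i j) (hμ0 j) i
      have : u' i₀ = 0 := by
        rw [hdecomp i₀]
        simp [ha0]
      exact hi₀ this
    -- hence the K-span S has dimension at most h
    have hSrank : Module.finrank K S ≤ h := by
      have hle1 : Module.finrank K S ≤ h + 1 := by
        classical
        calc Module.finrank K S ≤ (Set.range ut).toFinset.card := finrank_span_le_card _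
        _ ≤ h + 1 := by
            rw [Set.toFinset_range]
            exact (Finset.card_image_le).trans (by simp)
      have hne1 : Module.finrank K S ≠ h + 1 := by
        intro heq
        apply hKdep
        rw [linearIndependent_iff_card_eq_finrank_span]
        simpa [Set.finrank] using heq.symm
      omega
    -- extend S to an h-dimensional K-subspace W
    have : Module.Finite K (Fin k → K) := Module.Finite.of_finite
    have hVk : Module.finrank K (Fin k → K) = k := by
      rw [Module.finrank_pi]
      simp
    obtain ⟨W, hSW, _, hWrank⟩ :=
      aux_exists_intermediate (F := K) (V := (Fin k → K)) h S ⊤ le_top hSrank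
        (by rw [finrank_top, hVk]; omega)
    -- the h+1 independent vectors ut lie in U ⊓ W
    have hmem : ∀ i, ut i ∈ U ⊓ W.restrictScalars F := by
      intro i
      exact ⟨hutU i, (Submodule.restrictScalars_mem F W _).mpr (hSW (hutS i))⟩
    set P : Submodule F (Fin k → K) := U ⊓ W.restrictScalars F with hP
    let utP : Fin (h + 1) → ↥P := fun i => ⟨ut i, hmem i⟩
    have hutPind : LinearIndependent F utP := by
      apply LinearIndependent.of_comp P.subtype
      exact hutind
    have hcard : h + 1 ≤ Module.finrank F P := by
      have := hutPind.fintype_card_le_finrank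
      simpa using this
    have hfin : Module.finrank F ↥P ≤ h := hscatt W hWrank
    omega
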